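/- arXiv:1405.5362 — 2 statements merged into one kernel-verified Lean document; each statement's English description precedes it below -/
import Mathlib

section
/- The seven holomorphic vector fields S2 = ∂/∂w3, S1 = ∂/∂w2, T = ∂/∂w1, L1, L2, D, R on C^4 (with the explicit coefficients given) satisfy the bracket relations: [T, L2] = 4 S2, [T, L1] = 4 S1, [L2, L1] = −4T, [S2, D] = 3S2, [S1, D] = 3S1, [T, D] = 2T, [L2, D] = L2, [L1, D] = L1, [S2, R] = −S1, [S1, R] = S2, [L2, R] = −L1, [L1, R] = L2, [D, R] = 0, and [T, R] = 0. -/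
open Complex

noncomputable def prC (i : Fin 4) : (Fin 4 → ℂ) →L[ℂ] ℂ := ContinuousLinearMap.proj i

lemma fd_poly (f : (Fin 4 → ℂ) → ℂ) (k a b c d e : ℂ)
    (hf : f = fun q => k + a*q 0 + b*q 0^2 + c*q 1 + d*q 2 + e*q 3)
    (p v : Fin 4 → ℂ) :
    fderiv ℂ f p v = (a + 2*b*p 0) * v 0 + c * v 1 + d * v 2 + e * v 3 := by
  have h0 : HasFDerivAt (fun q : Fin 4 → ℂ => q 0) (prC 0) p := (prC 0).hasFDerivAt
  have h1 : HasFDerivAt (fun q : Fin 4 → ℂ => q 1) (prC 1) p := (prC 1).hasFDerivAt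
  have h2 : HasFDerivAt (fun q : Fin 4 → ℂ => q 2) (prC 2) p := (prC 2).hasFDerivAt
  have h3 : HasFDerivAt (fun q : Fin 4 → ℂ => q 3) (prC 3) p := (prC 3).hasFDerivAt
  have hsq : HasFDerivAt (fun q : Fin 4 → ℂ => q 0 ^ 2) (p 0 • prC 0 + p 0 • prC 0) p := by
    have hm := h0.mul h0
    simp only [pow_two]
    exact hm
  have h := ((((h0.const_mul a).add (hsq.const_mul b)).add (h1.const_mul c)).add
    ((h2.const_mul d).add (h3.const_mul e))).const_add k
  have hfe : f = (fun x : Fin 4 → ℂ =>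
      k + (a * x 0 + b * x 0 ^ 2 + c * x 1 + (d * x 2 + e * x 3))) := by
    rw [hf]; funext q; ring
  rw [hfe, (show HasFDerivAt (fun x : Fin 4 → ℂ =>
      k + (a * x 0 + b * x 0 ^ 2 + c * x 1 + (d * x 2 + e * x 3))) _ p from h).fderiv]
  simp only [ContinuousLinearMap.add_apply, ContinuousLinearMap.smul_apply, smul_eq_mul, prC,
    ContinuousLinearMap.proj_apply]
  ring

@[simp] lemma fdA (p v : Fin 4 → ℂ) :
    fderiv ℂ (fun q : Fin 4 → ℂ => 2 * Complex.I * q 0) p v = 2 * Complex.I * v 0 := by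
  rw [fd_poly _ 0 (2*Complex.I) 0 0 0 0 (by funext q; ring)]; ring

@[simp] lemma fdB (p v : Fin 4 → ℂ) :
    fderiv ℂ (fun q : Fin 4 → ℂ => 2 * Complex.I * q 0 ^ 2 + 4 * q 1) p v
      = 4 * Complex.I * p 0 * v 0 + 4 * v 1 := by
  rw [fd_poly _ 0 0 (2*Complex.I) 4 0 0 (by funext q; ring)]; ring

@[simp] lemma fdC (p v : Fin 4 → ℂ) :
    fderiv ℂ (fun q : Fin 4 → ℂ => 2 * q 0 ^ 2) p v = 4 * p 0 * v 0 := by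
  rw [fd_poly _ 0 0 2 0 0 0 (by funext q; ring)]; ring

@[simp] lemma fdD (p v : Fin 4 → ℂ) :
    fderiv ℂ (fun q : Fin 4 → ℂ => 2 * q 0) p v = 2 * v 0 := by
  rw [fd_poly _ 0 2 0 0 0 0 (by funext q; ring)]; ring

@[simp] lemma fdE (p v : Fin 4 → ℂ) :
    fderiv ℂ (fun q : Fin 4 → ℂ => -(2 * Complex.I * q 0 ^ 2 - 4 * q 1)) p v
      = -(4 * Complex.I * p 0 * v 0) + 4 * v 1 := by
  rw [fd_poly _ 0 0 (-(2*Complex.I)) 4 0 0 (by funext q; ring)]; ring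

@[simp] lemma fdF (p v : Fin 4 → ℂ) :
    fderiv ℂ (fun q : Fin 4 → ℂ => q 0) p v = v 0 := by
  rw [fd_poly _ 0 1 0 0 0 0 (by funext q; ring)]; ring

@[simp] lemma fdG (p v : Fin 4 → ℂ) :
    fderiv ℂ (fun q : Fin 4 → ℂ => 2 * q 1) p v = 2 * v 1 := by
  rw [fd_poly _ 0 0 0 2 0 0 (by funext q; ring)]; ring

@[simp] lemma fdH (p v : Fin 4 → ℂ) :
    fderiv ℂ (fun q : Fin 4 → ℂ => 3 * q 2) p v = 3 * v 2 := by
  rw [fd_poly _ 0 0 0 0 3 0 (by funext q; ring)]; ring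

@[simp] lemma fdI (p v : Fin 4 → ℂ) :
    fderiv ℂ (fun q : Fin 4 → ℂ => 3 * q 3) p v = 3 * v 3 := by
  rw [fd_poly _ 0 0 0 0 0 3 (by funext q; ring)]; ring

@[simp] lemma fdJ (p v : Fin 4 → ℂ) :
    fderiv ℂ (fun q : Fin 4 → ℂ => Complex.I * q 0) p v = Complex.I * v 0 := by
  rw [fd_poly _ 0 Complex.I 0 0 0 0 (by funext q; ring)]; ring

@[simp] lemma fdK (p v : Fin 4 → ℂ) :
    fderiv ℂ (fun q : Fin 4 → ℂ => -q 3) p v = -v 3 := by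
  rw [fd_poly _ 0 0 0 0 0 (-1) (by funext q; ring)]; ring

@[simp] lemma fdL (p v : Fin 4 → ℂ) :
    fderiv ℂ (fun q : Fin 4 → ℂ => q 2) p v = v 2 := by
  rw [fd_poly _ 0 0 0 0 1 0 (by funext q; ring)]; ring

@[simp] lemma fdP1 (p v : Fin 4 → ℂ) :
    fderiv ℂ (fun q : Fin 4 → ℂ => q 1) p v = v 1 := by
  rw [fd_poly _ 0 0 0 1 0 0 (by funext q; ring)]; ring

@[simp] lemma fdP3 (p v : Fin 4 → ℂ) :
    fderiv ℂ (fun q : Fin 4 → ℂ => q 3) p v = v 3 := by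
  rw [fd_poly _ 0 0 0 0 0 1 (by funext q; ring)]; ring

/-- Lie bracket of holomorphic vector fields on `ℂ⁴` in coordinates
`(z, w1, w2, w3)` (indices `0,…,3`): `[X,Y]^i = ∑_j (X^j ∂_j Y^i − Y^j ∂_j X^i)`. -/
noncomputable def lieC (X Y : (Fin 4 → ℂ) → Fin 4 → ℂ) :
    (Fin 4 → ℂ) → Fin 4 → ℂ :=
  fun p i => ∑ j : Fin 4,
    (X p j * fderiv ℂ (fun q => Y q i) p (Pi.single j 1)
     - Y p j * fderiv ℂ (fun q => X q i) p (Pi.single j 1))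

def S2 : (Fin 4 → ℂ) → Fin 4 → ℂ := fun _ => ![0, 0, 0, 1]
def S1 : (Fin 4 → ℂ) → Fin 4 → ℂ := fun _ => ![0, 0, 1, 0]
def Tf : (Fin 4 → ℂ) → Fin 4 → ℂ := fun _ => ![0, 1, 0, 0]
def L1 : (Fin 4 → ℂ) → Fin 4 → ℂ := fun p =>
  ![1, 2 * Complex.I * p 0, 2 * Complex.I * p 0 ^ 2 + 4 * p 1, 2 * p 0 ^ 2]
def L2 : (Fin 4 → ℂ) → Fin 4 → ℂ := fun p =>
  ![Complex.I, 2 * p 0, 2 * p 0 ^ 2, -(2 * Complex.I * p 0 ^ 2 - 4 * p 1)]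
def Df : (Fin 4 → ℂ) → Fin 4 → ℂ := fun p =>
  ![p 0, 2 * p 1, 3 * p 2, 3 * p 3]
def Rf : (Fin 4 → ℂ) → Fin 4 → ℂ := fun p =>
  ![Complex.I * p 0, 0, -p 3, p 2]

/-- The commutator table of the 7 infinitesimal CR automorphisms of
Beloshapka's cubic model. -/
theorem autCR_bracket_table :
    (∀ p, lieC Tf L2 p = (4 : ℂ) • S2 p) ∧
    (∀ p, lieC Tf L1 p = (4 : ℂ) • S1 p) ∧
    (∀ p, lieC L2 L1 p = (-4 : ℂ) • Tf p) ∧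
    (∀ p, lieC S2 Df p = (3 : ℂ) • S2 p) ∧
    (∀ p, lieC S1 Df p = (3 : ℂ) • S1 p) ∧
    (∀ p, lieC Tf Df p = (2 : ℂ) • Tf p) ∧
    (∀ p, lieC L2 Df p = L2 p) ∧
    (∀ p, lieC L1 Df p = L1 p) ∧
    (∀ p, lieC S2 Rf p = -S1 p) ∧
    (∀ p, lieC S1 Rf p = S2 p) ∧
    (∀ p, lieC L2 Rf p = -L1 p) ∧
    (∀ p, lieC L1 Rf p = L2 p) ∧
    (∀ p, lieC Df Rf p = 0) ∧
    (∀ p, lieC Tf Rf p = 0) := by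
  refine ⟨?_, ?_, ?_, ?_, ?_, ?_, ?_, ?_, ?_, ?_, ?_, ?_, ?_, ?_⟩ <;>
  · intro p
    funext i
    fin_cases i <;>
    · simp only [Fin.zero_eta, Fin.mk_one, Fin.reduceFinMk, lieC, Fin.sum_univ_four, S2, S1, Tf, L1, L2, Df, Rf, Fin.isValue,
        Matrix.cons_val_zero, Matrix.cons_val_one, Matrix.cons_val_two, Matrix.cons_val_three,
        Matrix.tail_cons, Matrix.head_cons, fdA, fdB, fdC, fdD, fdE, fdF, fdG, fdH, fdI, fdJ,
        fdK, fdL, fdP1, fdP3, fderiv_const, Pi.zero_apply, ContinuousLinearMap.zero_apply]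
      try simp [Pi.single_apply]
      try ring_nf
      try simp [Complex.I_sq]
      try ring_nf
end

section
/- The complex span of S2, S1, T, L2, L1, D, R is closed under Lie bracket, hence forms a 7-dimensional Lie algebra of vector fields on C^4. -/
open Complex

noncomputable def Pj (k : Fin 4) : (Fin 4 → ℂ) →L[ℂ] ℂ := ContinuousLinearMap.proj k

lemma keyHas (a b c d e f : ℂ) (p : Fin 4 → ℂ) :
    HasFDerivAt (fun q : Fin 4 → ℂ =>
        a * q 0 ^ 2 + b * q 0 + c * q 1 + d * q 2 + e * q 3 + f)
      ((2 * a * p 0 + b) • Pj 0 + c • Pj 1 + d • Pj 2 + e • Pj 3) p := by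
  have h0 : HasFDerivAt (fun q : Fin 4 → ℂ => q 0) (Pj 0) p := (Pj 0).hasFDerivAt
  have h1 : HasFDerivAt (fun q : Fin 4 → ℂ => q 1) (Pj 1) p := (Pj 1).hasFDerivAt
  have h2 : HasFDerivAt (fun q : Fin 4 → ℂ => q 2) (Pj 2) p := (Pj 2).hasFDerivAt
  have h3 : HasFDerivAt (fun q : Fin 4 → ℂ => q 3) (Pj 3) p := (Pj 3).hasFDerivAt
  have hsq : HasFDerivAt (fun q : Fin 4 → ℂ => q 0 ^ 2)
      (p 0 • Pj 0 + p 0 • Pj 0) p := by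
    have h00 := h0.mul h0
    simp only [pow_two]
    exact h00
  have := (((((hsq.const_mul a).add (h0.const_mul b)).add (h1.const_mul c)).add
      (h2.const_mul d)).add (h3.const_mul e)).add_const f
  refine this.congr_fderiv ?_
  ext v
  simp [Pj, ContinuousLinearMap.proj_apply]
  ring

lemma key (a b c d e f : ℂ) (p v : Fin 4 → ℂ) :
    fderiv ℂ (fun q : Fin 4 → ℂ =>
        a * q 0 ^ 2 + b * q 0 + c * q 1 + d * q 2 + e * q 3 + f) p v
      = (2 * a * p 0 + b) * v 0 + c * v 1 + d * v 2 + e * v 3 := by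
  rw [(keyHas a b c d e f p).fderiv]
  simp [Pj, ContinuousLinearMap.proj_apply]

lemma key' (g : (Fin 4 → ℂ) → ℂ) (a b c d e f : ℂ) (p v : Fin 4 → ℂ)
    (hg : g = fun q => a * q 0 ^ 2 + b * q 0 + c * q 1 + d * q 2 + e * q 3 + f) :
    fderiv ℂ g p v = (2 * a * p 0 + b) * v 0 + c * v 1 + d * v 2 + e * v 3 := by
  rw [hg, key]

lemma diffKey (g : (Fin 4 → ℂ) → ℂ) (a b c d e f : ℂ)
    (hg : g = fun q => a * q 0 ^ 2 + b * q 0 + c * q 1 + d * q 2 + e * q 3 + f) :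
    Differentiable ℂ g := fun p => hg ▸ (keyHas a b c d e f p).differentiableAt

lemma fdS2 (i : Fin 4) (p v : Fin 4 → ℂ) :
    fderiv ℂ (fun q => S2 q i) p v = 0 := by simp [S2]
lemma fdS1 (i : Fin 4) (p v : Fin 4 → ℂ) :
    fderiv ℂ (fun q => S1 q i) p v = 0 := by simp [S1]
lemma fdTf (i : Fin 4) (p v : Fin 4 → ℂ) :
    fderiv ℂ (fun q => Tf q i) p v = 0 := by simp [Tf]

lemma fdL1 (i : Fin 4) (p v : Fin 4 → ℂ) :
    fderiv ℂ (fun q => L1 q i) p v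
      = ![0, 2 * Complex.I * v 0, 4 * Complex.I * p 0 * v 0 + 4 * v 1,
          4 * p 0 * v 0] i := by
  fin_cases i
  · show fderiv ℂ (fun q => L1 q 0) p v = 0
    rw [key' _ 0 0 0 0 0 1 _ _ (by funext q; simp [L1])]; try ring
  · show fderiv ℂ (fun q => L1 q 1) p v = 2 * Complex.I * v 0
    rw [key' _ 0 (2 * Complex.I) 0 0 0 0 _ _ (by funext q; simp [L1]; try ring)]; try ring
  · show fderiv ℂ (fun q => L1 q 2) p v = 4 * Complex.I * p 0 * v 0 + 4 * v 1
    rw [key' _ (2 * Complex.I) 0 4 0 0 0 _ _ (by funext q; simp [L1]; try ring)]; try ring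
  · show fderiv ℂ (fun q => L1 q 3) p v = 4 * p 0 * v 0
    rw [key' _ 2 0 0 0 0 0 _ _ (by funext q; simp [L1]; try ring)]; try ring

lemma fdL2 (i : Fin 4) (p v : Fin 4 → ℂ) :
    fderiv ℂ (fun q => L2 q i) p v
      = ![0, 2 * v 0, 4 * p 0 * v 0, -(4 * Complex.I * p 0 * v 0) + 4 * v 1] i := by
  fin_cases i
  · show fderiv ℂ (fun q => L2 q 0) p v = 0
    rw [key' _ 0 0 0 0 0 Complex.I _ _ (by funext q; simp [L2])]; try ring
  · show fderiv ℂ (fun q => L2 q 1) p v = 2 * v 0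
    rw [key' _ 0 2 0 0 0 0 _ _ (by funext q; simp [L2]; try ring)]; try ring
  · show fderiv ℂ (fun q => L2 q 2) p v = 4 * p 0 * v 0
    rw [key' _ 2 0 0 0 0 0 _ _ (by funext q; simp [L2]; try ring)]; try ring
  · show fderiv ℂ (fun q => L2 q 3) p v = -(4 * Complex.I * p 0 * v 0) + 4 * v 1
    rw [key' _ (-(2 * Complex.I)) 0 4 0 0 0 _ _ (by funext q; simp [L2]; try ring)]; try ring

lemma fdDf (i : Fin 4) (p v : Fin 4 → ℂ) :
    fderiv ℂ (fun q => Df q i) p v = ![v 0, 2 * v 1, 3 * v 2, 3 * v 3] i := by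
  fin_cases i
  · show fderiv ℂ (fun q => Df q 0) p v = v 0
    rw [key' _ 0 1 0 0 0 0 _ _ (by funext q; simp [Df]; try ring)]; try ring
  · show fderiv ℂ (fun q => Df q 1) p v = 2 * v 1
    rw [key' _ 0 0 2 0 0 0 _ _ (by funext q; simp [Df]; try ring)]; try ring
  · show fderiv ℂ (fun q => Df q 2) p v = 3 * v 2
    rw [key' _ 0 0 0 3 0 0 _ _ (by funext q; simp [Df]; try ring)]; try ring
  · show fderiv ℂ (fun q => Df q 3) p v = 3 * v 3
    rw [key' _ 0 0 0 0 3 0 _ _ (by funext q; simp [Df]; try ring)]; try ring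

lemma fdRf (i : Fin 4) (p v : Fin 4 → ℂ) :
    fderiv ℂ (fun q => Rf q i) p v = ![Complex.I * v 0, 0, -v 3, v 2] i := by
  fin_cases i
  · show fderiv ℂ (fun q => Rf q 0) p v = Complex.I * v 0
    rw [key' _ 0 Complex.I 0 0 0 0 _ _ (by funext q; simp [Rf]; try ring)]; try ring
  · show fderiv ℂ (fun q => Rf q 1) p v = 0
    rw [key' _ 0 0 0 0 0 0 _ _ (by funext q; simp [Rf]; try ring)]; try ring
  · show fderiv ℂ (fun q => Rf q 2) p v = -v 3
    rw [key' _ 0 0 0 0 (-1) 0 _ _ (by funext q; simp [Rf]; try ring)]; try ring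
  · show fderiv ℂ (fun q => Rf q 3) p v = v 2
    rw [key' _ 0 0 0 1 0 0 _ _ (by funext q; simp [Rf]; try ring)]; try ring
lemma bS2S1 : lieC S2 S1 = (0:ℂ) • S2 := by
  funext p i
  simp only [lieC, Fin.sum_univ_four, fdS2, fdS1]
  fin_cases i <;>
    simp [S2, S1, S2, Pi.single_apply] <;> ring_nf <;>
    simp [Complex.I_sq] <;> ring_nf

lemma bS2Tf : lieC S2 Tf = (0:ℂ) • S2 := by
  funext p i
  simp only [lieC, Fin.sum_univ_four, fdS2, fdTf]
  fin_cases i <;>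
    simp [S2, Tf, S2, Pi.single_apply] <;> ring_nf <;>
    simp [Complex.I_sq] <;> ring_nf

lemma bS2L2 : lieC S2 L2 = (0:ℂ) • S2 := by
  funext p i
  simp only [lieC, Fin.sum_univ_four, fdS2, fdL2]
  fin_cases i <;>
    simp [S2, L2, S2, Pi.single_apply] <;> ring_nf <;>
    simp [Complex.I_sq] <;> ring_nf

lemma bS2L1 : lieC S2 L1 = (0:ℂ) • S2 := by
  funext p i
  simp only [lieC, Fin.sum_univ_four, fdS2, fdL1]
  fin_cases i <;>
    simp [S2, L1, S2, Pi.single_apply] <;> ring_nf <;>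
    simp [Complex.I_sq] <;> ring_nf

lemma bS2Df : lieC S2 Df = (3:ℂ) • S2 := by
  funext p i
  simp only [lieC, Fin.sum_univ_four, fdS2, fdDf]
  fin_cases i <;>
    simp [S2, Df, S2, Pi.single_apply] <;> ring_nf <;>
    simp [Complex.I_sq] <;> ring_nf

lemma bS2Rf : lieC S2 Rf = (-1:ℂ) • S1 := by
  funext p i
  simp only [lieC, Fin.sum_univ_four, fdS2, fdRf]
  fin_cases i <;>
    simp [S2, Rf, S1, Pi.single_apply] <;> ring_nf <;>
    simp [Complex.I_sq] <;> ring_nf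

lemma bS1Tf : lieC S1 Tf = (0:ℂ) • S2 := by
  funext p i
  simp only [lieC, Fin.sum_univ_four, fdS1, fdTf]
  fin_cases i <;>
    simp [S1, Tf, S2, Pi.single_apply] <;> ring_nf <;>
    simp [Complex.I_sq] <;> ring_nf

lemma bS1L2 : lieC S1 L2 = (0:ℂ) • S2 := by
  funext p i
  simp only [lieC, Fin.sum_univ_four, fdS1, fdL2]
  fin_cases i <;>
    simp [S1, L2, S2, Pi.single_apply] <;> ring_nf <;>
    simp [Complex.I_sq] <;> ring_nf

lemma bS1L1 : lieC S1 L1 = (0:ℂ) • S2 := by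
  funext p i
  simp only [lieC, Fin.sum_univ_four, fdS1, fdL1]
  fin_cases i <;>
    simp [S1, L1, S2, Pi.single_apply] <;> ring_nf <;>
    simp [Complex.I_sq] <;> ring_nf

lemma bS1Df : lieC S1 Df = (3:ℂ) • S1 := by
  funext p i
  simp only [lieC, Fin.sum_univ_four, fdS1, fdDf]
  fin_cases i <;>
    simp [S1, Df, S1, Pi.single_apply] <;> ring_nf <;>
    simp [Complex.I_sq] <;> ring_nf

lemma bS1Rf : lieC S1 Rf = (1:ℂ) • S2 := by
  funext p i
  simp only [lieC, Fin.sum_univ_four, fdS1, fdRf]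
  fin_cases i <;>
    simp [S1, Rf, S2, Pi.single_apply] <;> ring_nf <;>
    simp [Complex.I_sq] <;> ring_nf

lemma bTfL2 : lieC Tf L2 = (4:ℂ) • S2 := by
  funext p i
  simp only [lieC, Fin.sum_univ_four, fdTf, fdL2]
  fin_cases i <;>
    simp [Tf, L2, S2, Pi.single_apply] <;> ring_nf <;>
    simp [Complex.I_sq] <;> ring_nf

lemma bTfL1 : lieC Tf L1 = (4:ℂ) • S1 := by
  funext p i
  simp only [lieC, Fin.sum_univ_four, fdTf, fdL1]
  fin_cases i <;>
    simp [Tf, L1, S1, Pi.single_apply] <;> ring_nf <;>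
    simp [Complex.I_sq] <;> ring_nf

lemma bTfDf : lieC Tf Df = (2:ℂ) • Tf := by
  funext p i
  simp only [lieC, Fin.sum_univ_four, fdTf, fdDf]
  fin_cases i <;>
    simp [Tf, Df, Tf, Pi.single_apply] <;> ring_nf <;>
    simp [Complex.I_sq] <;> ring_nf

lemma bTfRf : lieC Tf Rf = (0:ℂ) • S2 := by
  funext p i
  simp only [lieC, Fin.sum_univ_four, fdTf, fdRf]
  fin_cases i <;>
    simp [Tf, Rf, S2, Pi.single_apply] <;> ring_nf <;>
    simp [Complex.I_sq] <;> ring_nf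

lemma bL2L1 : lieC L2 L1 = (-4:ℂ) • Tf := by
  funext p i
  simp only [lieC, Fin.sum_univ_four, fdL2, fdL1]
  fin_cases i <;>
    simp [L2, L1, Tf, Pi.single_apply] <;> ring_nf <;>
    simp [Complex.I_sq] <;> ring_nf

lemma bL2Df : lieC L2 Df = (1:ℂ) • L2 := by
  funext p i
  simp only [lieC, Fin.sum_univ_four, fdL2, fdDf]
  fin_cases i <;>
    simp [L2, Df, L2, Pi.single_apply] <;> ring_nf <;>
    simp [Complex.I_sq] <;> ring_nf

lemma bL2Rf : lieC L2 Rf = (-1:ℂ) • L1 := by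
  funext p i
  simp only [lieC, Fin.sum_univ_four, fdL2, fdRf]
  fin_cases i <;>
    simp [L2, Rf, L1, Pi.single_apply] <;> ring_nf <;>
    simp [Complex.I_sq] <;> ring_nf

lemma bL1Df : lieC L1 Df = (1:ℂ) • L1 := by
  funext p i
  simp only [lieC, Fin.sum_univ_four, fdL1, fdDf]
  fin_cases i <;>
    simp [L1, Df, L1, Pi.single_apply] <;> ring_nf <;>
    simp [Complex.I_sq] <;> ring_nf

lemma bL1Rf : lieC L1 Rf = (1:ℂ) • L2 := by
  funext p i
  simp only [lieC, Fin.sum_univ_four, fdL1, fdRf]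
  fin_cases i <;>
    simp [L1, Rf, L2, Pi.single_apply] <;> ring_nf <;>
    simp [Complex.I_sq] <;> ring_nf

lemma bDfRf : lieC Df Rf = (0:ℂ) • S2 := by
  funext p i
  simp only [lieC, Fin.sum_univ_four, fdDf, fdRf]
  fin_cases i <;>
    simp [Df, Rf, S2, Pi.single_apply] <;> ring_nf <;>
    simp [Complex.I_sq] <;> ring_nf

def Diff (X : (Fin 4 → ℂ) → Fin 4 → ℂ) : Prop :=
  ∀ i : Fin 4, Differentiable ℂ (fun q => X q i)

lemma diffS2 : Diff S2 := by
  intro i; exact differentiable_const _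
lemma diffS1 : Diff S1 := by
  intro i; exact differentiable_const _
lemma diffTf : Diff Tf := by
  intro i; exact differentiable_const _
lemma diffL1 : Diff L1 := by
  intro i; fin_cases i
  · exact diffKey _ 0 0 0 0 0 1 (by funext q; simp [L1])
  · exact diffKey _ 0 (2 * Complex.I) 0 0 0 0 (by funext q; simp [L1]; try ring)
  · exact diffKey _ (2 * Complex.I) 0 4 0 0 0 (by funext q; simp [L1]; try ring)
  · exact diffKey _ 2 0 0 0 0 0 (by funext q; simp [L1]; try ring)
lemma diffL2 : Diff L2 := by
  intro i; fin_cases i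
  · exact diffKey _ 0 0 0 0 0 Complex.I (by funext q; simp [L2])
  · exact diffKey _ 0 2 0 0 0 0 (by funext q; simp [L2]; try ring)
  · exact diffKey _ 2 0 0 0 0 0 (by funext q; simp [L2]; try ring)
  · exact diffKey _ (-(2 * Complex.I)) 0 4 0 0 0 (by funext q; simp [L2]; try ring)
lemma diffDf : Diff Df := by
  intro i; fin_cases i
  · exact diffKey _ 0 1 0 0 0 0 (by funext q; simp [Df]; try ring)
  · exact diffKey _ 0 0 2 0 0 0 (by funext q; simp [Df]; try ring)
  · exact diffKey _ 0 0 0 3 0 0 (by funext q; simp [Df]; try ring)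
  · exact diffKey _ 0 0 0 0 3 0 (by funext q; simp [Df]; try ring)
lemma diffRf : Diff Rf := by
  intro i; fin_cases i
  · exact diffKey _ 0 Complex.I 0 0 0 0 (by funext q; simp [Rf]; try ring)
  · exact diffKey _ 0 0 0 0 0 0 (by funext q; simp [Rf]; try ring)
  · exact diffKey _ 0 0 0 0 (-1) 0 (by funext q; simp [Rf]; try ring)
  · exact diffKey _ 0 0 0 1 0 0 (by funext q; simp [Rf]; try ring)

lemma diff_span {Z : (Fin 4 → ℂ) → Fin 4 → ℂ}
    (hZ : Z ∈ Submodule.span ℂ ({S2, S1, Tf, L2, L1, Df, Rf} :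
      Set ((Fin 4 → ℂ) → Fin 4 → ℂ))) : Diff Z := by
  induction hZ using Submodule.span_induction with
  | mem x hx =>
      rcases hx with rfl | rfl | rfl | rfl | rfl | rfl | rfl
      exacts [diffS2, diffS1, diffTf, diffL2, diffL1, diffDf, diffRf]
  | zero => intro i; exact differentiable_const 0
  | add x y _ _ hx hy =>
      intro i
      exact ((hx i).add (hy i) : Differentiable ℂ (fun q => x q i + y q i))
  | smul c x _ hx =>
      intro i
      exact ((hx i).const_smul c : Differentiable ℂ (fun q => c • x q i))

lemma lieC_swap (X Y : (Fin 4 → ℂ) → Fin 4 → ℂ) : lieC Y X = -lieC X Y := by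
  funext p i
  simp [lieC, neg_sub, ← Finset.sum_neg_distrib]

lemma lieC_zero_right (X : (Fin 4 → ℂ) → Fin 4 → ℂ) : lieC X 0 = 0 := by
  funext p i
  simp [lieC]

lemma lieC_zero_left (X : (Fin 4 → ℂ) → Fin 4 → ℂ) : lieC 0 X = 0 := by
  rw [lieC_swap, lieC_zero_right, neg_zero]

lemma lieC_add_right (X Y Z : (Fin 4 → ℂ) → Fin 4 → ℂ) (hY : Diff Y) (hZ : Diff Z) :
    lieC X (Y + Z) = lieC X Y + lieC X Z := by
  funext p i
  have h : fderiv ℂ (fun q => Y q i + Z q i) p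
      = fderiv ℂ (fun q => Y q i) p + fderiv ℂ (fun q => Z q i) p :=
    fderiv_add ((hY i).differentiableAt) ((hZ i).differentiableAt)
  simp only [lieC, Pi.add_apply, h, ContinuousLinearMap.add_apply,
    ← Finset.sum_add_distrib]
  apply Finset.sum_congr rfl
  intros; ring

lemma lieC_smul_right (X Y : (Fin 4 → ℂ) → Fin 4 → ℂ) (c : ℂ) (hY : Diff Y) :
    lieC X (c • Y) = c • lieC X Y := by
  funext p i
  have h : fderiv ℂ (fun q => c * Y q i) p
      = c • fderiv ℂ (fun q => Y q i) p :=
    fderiv_const_mul ((hY i).differentiableAt) c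
  simp only [lieC, Pi.smul_apply, h, ContinuousLinearMap.smul_apply,
    smul_eq_mul, Finset.mul_sum]
  apply Finset.sum_congr rfl
  intros; ring

lemma lieC_add_left (X Y Z : (Fin 4 → ℂ) → Fin 4 → ℂ) (hX : Diff X) (hY : Diff Y) :
    lieC (X + Y) Z = lieC X Z + lieC Y Z := by
  rw [lieC_swap, lieC_add_right _ _ _ hX hY, lieC_swap Z X, lieC_swap Z Y]
  funext p i; simp; ring

lemma lieC_smul_left (X Y : (Fin 4 → ℂ) → Fin 4 → ℂ) (c : ℂ) (hX : Diff X) :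
    lieC (c • X) Y = c • lieC X Y := by
  rw [lieC_swap, lieC_smul_right _ _ _ hX, lieC_swap X Y]
  funext p i; simp
lemma lieC_self (X : (Fin 4 → ℂ) → Fin 4 → ℂ) : lieC X X = 0 := by
  funext p i; simp [lieC]

lemma table : ∀ x ∈ ({S2, S1, Tf, L2, L1, Df, Rf} :
      Set ((Fin 4 → ℂ) → Fin 4 → ℂ)),
    ∀ y ∈ ({S2, S1, Tf, L2, L1, Df, Rf} : Set ((Fin 4 → ℂ) → Fin 4 → ℂ)),
    lieC x y ∈ Submodule.span ℂ ({S2, S1, Tf, L2, L1, Df, Rf} :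
      Set ((Fin 4 → ℂ) → Fin 4 → ℂ)) := by
  have m : ∀ z ∈ ({S2, S1, Tf, L2, L1, Df, Rf} :
      Set ((Fin 4 → ℂ) → Fin 4 → ℂ)),
      z ∈ Submodule.span ℂ ({S2, S1, Tf, L2, L1, Df, Rf} :
        Set ((Fin 4 → ℂ) → Fin 4 → ℂ)) := fun z hz => Submodule.subset_span hz
  intro x hx y hy
  rcases hx with rfl|rfl|rfl|rfl|rfl|rfl|rfl <;>
    rcases hy with rfl|rfl|rfl|rfl|rfl|rfl|rfl
  · rw [lieC_self]; exact zero_mem _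
  · rw [bS2S1]; exact Submodule.smul_mem _ _ (m S2 (by simp))
  · rw [bS2Tf]; exact Submodule.smul_mem _ _ (m S2 (by simp))
  · rw [bS2L2]; exact Submodule.smul_mem _ _ (m S2 (by simp))
  · rw [bS2L1]; exact Submodule.smul_mem _ _ (m S2 (by simp))
  · rw [bS2Df]; exact Submodule.smul_mem _ _ (m S2 (by simp))
  · rw [bS2Rf]; exact Submodule.smul_mem _ _ (m S1 (by simp))
  · rw [lieC_swap S2 S1, bS2S1]; exact neg_mem (Submodule.smul_mem _ _ (m S2 (by simp)))
  · rw [lieC_self]; exact zero_mem _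
  · rw [bS1Tf]; exact Submodule.smul_mem _ _ (m S2 (by simp))
  · rw [bS1L2]; exact Submodule.smul_mem _ _ (m S2 (by simp))
  · rw [bS1L1]; exact Submodule.smul_mem _ _ (m S2 (by simp))
  · rw [bS1Df]; exact Submodule.smul_mem _ _ (m S1 (by simp))
  · rw [bS1Rf]; exact Submodule.smul_mem _ _ (m S2 (by simp))
  · rw [lieC_swap S2 Tf, bS2Tf]; exact neg_mem (Submodule.smul_mem _ _ (m S2 (by simp)))
  · rw [lieC_swap S1 Tf, bS1Tf]; exact neg_mem (Submodule.smul_mem _ _ (m S2 (by simp)))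
  · rw [lieC_self]; exact zero_mem _
  · rw [bTfL2]; exact Submodule.smul_mem _ _ (m S2 (by simp))
  · rw [bTfL1]; exact Submodule.smul_mem _ _ (m S1 (by simp))
  · rw [bTfDf]; exact Submodule.smul_mem _ _ (m Tf (by simp))
  · rw [bTfRf]; exact Submodule.smul_mem _ _ (m S2 (by simp))
  · rw [lieC_swap S2 L2, bS2L2]; exact neg_mem (Submodule.smul_mem _ _ (m S2 (by simp)))
  · rw [lieC_swap S1 L2, bS1L2]; exact neg_mem (Submodule.smul_mem _ _ (m S2 (by simp)))
  · rw [lieC_swap Tf L2, bTfL2]; exact neg_mem (Submodule.smul_mem _ _ (m S2 (by simp)))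
  · rw [lieC_self]; exact zero_mem _
  · rw [bL2L1]; exact Submodule.smul_mem _ _ (m Tf (by simp))
  · rw [bL2Df]; exact Submodule.smul_mem _ _ (m L2 (by simp))
  · rw [bL2Rf]; exact Submodule.smul_mem _ _ (m L1 (by simp))
  · rw [lieC_swap S2 L1, bS2L1]; exact neg_mem (Submodule.smul_mem _ _ (m S2 (by simp)))
  · rw [lieC_swap S1 L1, bS1L1]; exact neg_mem (Submodule.smul_mem _ _ (m S2 (by simp)))
  · rw [lieC_swap Tf L1, bTfL1]; exact neg_mem (Submodule.smul_mem _ _ (m S1 (by simp)))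
  · rw [lieC_swap L2 L1, bL2L1]; exact neg_mem (Submodule.smul_mem _ _ (m Tf (by simp)))
  · rw [lieC_self]; exact zero_mem _
  · rw [bL1Df]; exact Submodule.smul_mem _ _ (m L1 (by simp))
  · rw [bL1Rf]; exact Submodule.smul_mem _ _ (m L2 (by simp))
  · rw [lieC_swap S2 Df, bS2Df]; exact neg_mem (Submodule.smul_mem _ _ (m S2 (by simp)))
  · rw [lieC_swap S1 Df, bS1Df]; exact neg_mem (Submodule.smul_mem _ _ (m S1 (by simp)))
  · rw [lieC_swap Tf Df, bTfDf]; exact neg_mem (Submodule.smul_mem _ _ (m Tf (by simp)))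
  · rw [lieC_swap L2 Df, bL2Df]; exact neg_mem (Submodule.smul_mem _ _ (m L2 (by simp)))
  · rw [lieC_swap L1 Df, bL1Df]; exact neg_mem (Submodule.smul_mem _ _ (m L1 (by simp)))
  · rw [lieC_self]; exact zero_mem _
  · rw [bDfRf]; exact Submodule.smul_mem _ _ (m S2 (by simp))
  · rw [lieC_swap S2 Rf, bS2Rf]; exact neg_mem (Submodule.smul_mem _ _ (m S1 (by simp)))
  · rw [lieC_swap S1 Rf, bS1Rf]; exact neg_mem (Submodule.smul_mem _ _ (m S2 (by simp)))
  · rw [lieC_swap Tf Rf, bTfRf]; exact neg_mem (Submodule.smul_mem _ _ (m S2 (by simp)))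
  · rw [lieC_swap L2 Rf, bL2Rf]; exact neg_mem (Submodule.smul_mem _ _ (m L1 (by simp)))
  · rw [lieC_swap L1 Rf, bL1Rf]; exact neg_mem (Submodule.smul_mem _ _ (m L2 (by simp)))
  · rw [lieC_swap Df Rf, bDfRf]; exact neg_mem (Submodule.smul_mem _ _ (m S2 (by simp)))
  · rw [lieC_self]; exact zero_mem _

lemma spanClosed : ∀ X Y : (Fin 4 → ℂ) → Fin 4 → ℂ,
    X ∈ Submodule.span ℂ ({S2, S1, Tf, L2, L1, Df, Rf} :
      Set ((Fin 4 → ℂ) → Fin 4 → ℂ)) →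
    Y ∈ Submodule.span ℂ ({S2, S1, Tf, L2, L1, Df, Rf} :
      Set ((Fin 4 → ℂ) → Fin 4 → ℂ)) →
    lieC X Y ∈ Submodule.span ℂ ({S2, S1, Tf, L2, L1, Df, Rf} :
      Set ((Fin 4 → ℂ) → Fin 4 → ℂ)) := by
  intro X Y hX hY
  induction hX using Submodule.span_induction with
  | mem x hx =>
      induction hY using Submodule.span_induction with
      | mem y hy => exact table x hx y hy
      | zero => rw [lieC_zero_right]; exact zero_mem _
      | add y z hy hz ihy ihz =>
          rw [lieC_add_right x y z (diff_span hy) (diff_span hz)]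
          exact add_mem ihy ihz
      | smul c y hy ihy =>
          rw [lieC_smul_right x y c (diff_span hy)]
          exact Submodule.smul_mem _ _ ihy
  | zero => rw [lieC_zero_left]; exact zero_mem _
  | add x x' hx hx' ih ih' =>
      rw [lieC_add_left x x' Y (diff_span hx) (diff_span hx')]
      exact add_mem ih ih'
  | smul c x hx ih =>
      rw [lieC_smul_left x Y c (diff_span hx)]
      exact Submodule.smul_mem _ _ ih


lemma linIndep : LinearIndependent ℂ ![S2, S1, Tf, L2, L1, Df, Rf] := by
  rw [Fintype.linearIndependent_iff]
  intro g h
  rw [Fin.sum_univ_seven] at h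
  have h' : g 0 • S2 + g 1 • S1 + g 2 • Tf + g 3 • L2 + g 4 • L1 + g 5 • Df
      + g 6 • Rf = 0 := h
  have hA := congrFun (congrFun h' ![0,0,0,0]) 0
  have hB := congrFun (congrFun h' ![0,0,0,0]) 1
  have hC := congrFun (congrFun h' ![0,0,0,0]) 2
  have hD := congrFun (congrFun h' ![0,0,0,0]) 3
  have hE := congrFun (congrFun h' ![1,0,0,0]) 0
  have hF := congrFun (congrFun h' ![1,0,0,0]) 1
  have hG := congrFun (congrFun h' ![0,1,0,0]) 1
  simp [S2, S1, Tf, L2, L1, Df, Rf] at hA hB hC hD hE hF hG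
  intro i
  fin_cases i
  · exact hD
  · exact hC
  · exact hB
  · -- g 3 = 0
    show g 3 = 0
    linear_combination (1/4 : ℂ) * hF - (1/4 : ℂ) * hB - (Complex.I/2) * hA
      + (g 3 / 2) * Complex.I_sq
  · -- g 4 = 0
    show g 4 = 0
    linear_combination (1/2 : ℂ) * hA - (Complex.I/4) * hF + (Complex.I/4) * hB
      + (g 4 / 2) * Complex.I_sq
  · -- g 5 = 0
    show g 5 = 0
    linear_combination (1/2 : ℂ) * hG - (1/2 : ℂ) * hB
  · -- g 6 = 0
    show g 6 = 0
    linear_combination (-Complex.I) * hE + Complex.I * hA + (Complex.I/2) * hG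
      - (Complex.I/2) * hB + (g 6) * Complex.I_sq

lemma setEqRange : ({S2, S1, Tf, L2, L1, Df, Rf} :
    Set ((Fin 4 → ℂ) → Fin 4 → ℂ)) = Set.range ![S2, S1, Tf, L2, L1, Df, Rf] := by
  ext x
  constructor
  · rintro (rfl|rfl|rfl|rfl|rfl|rfl|rfl)
    exacts [⟨0, rfl⟩, ⟨1, rfl⟩, ⟨2, rfl⟩, ⟨3, rfl⟩, ⟨4, rfl⟩, ⟨5, rfl⟩, ⟨6, rfl⟩]
  · rintro ⟨i, rfl⟩
    fin_cases i <;> simp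

lemma dim7 : Module.finrank ℂ
    (Submodule.span ℂ ({S2, S1, Tf, L2, L1, Df, Rf} :
      Set ((Fin 4 → ℂ) → Fin 4 → ℂ))) = 7 := by
  rw [setEqRange, finrank_span_eq_card linIndep]
  simp

/-- The complex span of `S2, S1, T, L2, L1, D, R` is closed under Lie bracket,
hence forms a 7-dimensional Lie algebra of vector fields on `ℂ⁴`. -/
theorem autCR_span_closed :
    (∀ X Y : (Fin 4 → ℂ) → Fin 4 → ℂ,
      X ∈ Submodule.span ℂ ({S2, S1, Tf, L2, L1, Df, Rf} :
        Set ((Fin 4 → ℂ) → Fin 4 → ℂ)) →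
      Y ∈ Submodule.span ℂ ({S2, S1, Tf, L2, L1, Df, Rf} :
        Set ((Fin 4 → ℂ) → Fin 4 → ℂ)) →
      lieC X Y ∈ Submodule.span ℂ ({S2, S1, Tf, L2, L1, Df, Rf} :
        Set ((Fin 4 → ℂ) → Fin 4 → ℂ))) ∧
    Module.finrank ℂ
      (Submodule.span ℂ ({S2, S1, Tf, L2, L1, Df, Rf} :
        Set ((Fin 4 → ℂ) → Fin 4 → ℂ))) = 7 :=
  ⟨spanClosed, dim7⟩
end
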